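/- For all φ₀, φ₁ with 0 < φ₀ < φ₁ < π/2, the map T_{C_r}(α) := 2T(α) + T₁(α, φ₀) − T₁(α, φ₁) satisfies T_{C_r}(α) → T_* as α → φ₁⁺ and T_{C_r}(α) > T_* for every α ∈ (φ₁, π/2), where T_* := T(φ₁) + T₁(φ₁, φ₀). -/

import Mathlib

open Real Filter

/-- The time map `T(α) = ∫₀^α dx / √(cos 2x − cos 2α)`. -/
noncomputable def timeMapT (α : ℝ) : ℝ :=
  ∫ x in (0:ℝ)..α, 1 / Real.sqrt (Real.cos (2 * x) - Real.cos (2 * α))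

/-- The time map `T₁(α, φ) = ∫₀^φ dx / √(cos 2x − cos 2α)`. -/
noncomputable def timeMapT1 (α φ : ℝ) : ℝ :=
  ∫ x in (0:ℝ)..φ, 1 / Real.sqrt (Real.cos (2 * x) - Real.cos (2 * α))

namespace TimeAux

open MeasureTheory Set intervalIntegral

noncomputable def f (α x : ℝ) : ℝ := 1 / Real.sqrt (Real.cos (2 * x) - Real.cos (2 * α))

lemma den_eq (α x : ℝ) :
    Real.cos (2 * x) - Real.cos (2 * α) = 2 * (Real.sin (α + x) * Real.sin (α - x)) := by
  rw [Real.cos_sub_cos, show (2*x + 2*α)/2 = α + x by ring,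
    show (2*x - 2*α)/2 = -(α - x) by ring, Real.sin_neg]
  ring

lemma den_pos {x α : ℝ} (hx : 0 ≤ x) (hxα : x < α) (hα : α ≤ π/2) :
    0 < Real.cos (2 * x) - Real.cos (2 * α) := by
  rw [den_eq]
  have h1 : 0 < Real.sin (α + x) :=
    Real.sin_pos_of_pos_of_lt_pi (by linarith) (by linarith [Real.pi_pos])
  have h2 : 0 < Real.sin (α - x) :=
    Real.sin_pos_of_pos_of_lt_pi (by linarith) (by linarith [Real.pi_pos])
  positivity

lemma f_meas (α : ℝ) : Measurable (f α) := by
  apply Measurable.div measurable_const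
  exact (Real.continuous_sqrt.comp (by fun_prop)).measurable

lemma f_nonneg (α x : ℝ) : 0 ≤ f α x := by
  unfold f; positivity

/-- Lower bound for the denominator. -/
lemma den_lb {m α x : ℝ} (hm0 : 0 ≤ m) (hm : m ≤ Real.sin (α + x))
    (hx : 0 ≤ α - x) (hx2 : α - x ≤ π/2) :
    4/π * m * (α - x) ≤ Real.cos (2 * x) - Real.cos (2 * α) := by
  rw [den_eq]
  have h1 : 2/π * (α - x) ≤ Real.sin (α - x) := Real.mul_le_sin hx hx2
  have hπ := Real.pi_pos
  have h2 : m * (2/π * (α - x)) ≤ Real.sin (α + x) * Real.sin (α - x) :=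
    mul_le_mul hm h1 (by positivity) (hm0.trans hm)
  have : 4/π * m * (α - x) = 2 * (m * (2/π * (α - x))) := by field_simp; ring
  linarith

/-- Pointwise bound by an integrable singular function. -/
lemma f_le {α x c : ℝ} (hc : 0 < c)
    (h : c * (α - x) ≤ Real.cos (2 * x) - Real.cos (2 * α)) (hx : x ≤ α) :
    f α x ≤ (1 / Real.sqrt c) * ((α - x) ^ (-(1:ℝ)/2)) := by
  rcases eq_or_lt_of_le hx with rfl | hlt
  · have : f x x = 0 := by unfold f; simp
    rw [this, sub_self, Real.zero_rpow (by norm_num)]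
    positivity
  · have hax : 0 < α - x := by linarith
    have hrw : (α - x) ^ (-(1:ℝ)/2) = (Real.sqrt (α - x))⁻¹ := by
      rw [show (-(1:ℝ)/2) = -(1/2) by norm_num, Real.rpow_neg hax.le,
        ← Real.sqrt_eq_rpow]
    rw [hrw]
    have hden : 0 < c * (α - x) := by positivity
    have key : f α x ≤ 1 / Real.sqrt (c * (α - x)) := by
      apply one_div_le_one_div_of_le (Real.sqrt_pos.2 hden) (Real.sqrt_le_sqrt h)
    calc f α x ≤ 1 / Real.sqrt (c * (α - x)) := key
      _ = (1 / Real.sqrt c) * (Real.sqrt (α - x))⁻¹ := by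
          rw [Real.sqrt_mul hc.le]; field_simp
      _ ≤ _ := le_refl _

lemma bound_integrable (c a b : ℝ) :
    IntervalIntegrable (fun x => (1 / Real.sqrt c) * ((b - x) ^ (-(1:ℝ)/2)))
      volume a b := by
  apply IntervalIntegrable.const_mul
  have h := (intervalIntegrable_rpow' (a := b - a) (b := b - b)
    (r := -(1:ℝ)/2) (by norm_num)).comp_sub_left b
  simpa using h

lemma sin_min {a b t : ℝ} (ha : 0 ≤ a) (hat : a ≤ t) (htb : t ≤ b) (hb : b ≤ π) :
    min (Real.sin a) (Real.sin b) ≤ Real.sin t := by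
  rcases le_or_gt t (π/2) with h | h
  · refine le_trans (min_le_left _ _) ?_
    exact Real.strictMonoOn_sin.monotoneOn ⟨by linarith [Real.pi_pos], by linarith⟩
      ⟨by linarith [Real.pi_pos], h⟩ hat
  · refine le_trans (min_le_right _ _) ?_
    rw [← Real.sin_pi_sub t, ← Real.sin_pi_sub b]
    exact Real.strictMonoOn_sin.monotoneOn ⟨by linarith [Real.pi_pos], by linarith⟩
      ⟨by linarith [Real.pi_pos], by linarith⟩ (by linarith)

lemma integrable_f {α : ℝ} (hα0 : 0 < α) (hα : α < π/2) :
    IntervalIntegrable (f α) volume 0 α := by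
  have hπ := Real.pi_pos
  set m := min (Real.sin α) (Real.sin (2*α)) with hm
  have hm0 : 0 < m := lt_min (Real.sin_pos_of_pos_of_lt_pi hα0 (by linarith))
    (Real.sin_pos_of_pos_of_lt_pi (by linarith) (by linarith))
  set c := 4/π * m with hc
  have hc0 : 0 < c := by positivity
  apply (bound_integrable c 0 α).mono_fun' ((f_meas α).aestronglyMeasurable)
  rw [EventuallyLE, ae_restrict_iff' measurableSet_uIoc]
  filter_upwards with x hx
  rw [Set.uIoc_of_le hα0.le] at hx
  obtain ⟨hx0, hxα⟩ := hx
  rw [Real.norm_eq_abs, abs_of_nonneg (f_nonneg α x)]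
  apply f_le hc0 _ hxα
  apply den_lb hm0.le _ (by linarith) (by linarith)
  exact sin_min hα0.le (by linarith) (by linarith) (by linarith)

lemma T_scale {β : ℝ} (hβ : 0 < β) :
    timeMapT β = ∫ u in (0:ℝ)..(1:ℝ), β * f β (u * β) := by
  have h := intervalIntegral.smul_integral_comp_mul_right (f := f β)
    (a := (0:ℝ)) (b := (1:ℝ)) β
  simp only [zero_mul, one_mul, smul_eq_mul] at h
  rw [show timeMapT β = ∫ x in (0:ℝ)..β, f β x from rfl, ← h,
    ← intervalIntegral.integral_const_mul]

lemma Fscaled_integrable {β : ℝ} (hβ0 : 0 < β) (hβ : β < π/2) :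
    IntervalIntegrable (fun u => β * f β (u * β)) volume 0 1 := by
  have h := (integrable_f hβ0 hβ).comp_mul_right (c := β)
  rw [zero_div, div_self hβ0.ne'] at h
  exact h.const_mul β

lemma sinc_anti : StrictAntiOn (fun t => Real.sin t / t) (Set.Ioo 0 π) := by
  apply strictAntiOn_of_deriv_neg (convex_Ioo 0 π)
  · exact Real.continuous_sin.continuousOn.div continuousOn_id
      (fun x hx => ne_of_gt hx.1)
  · intro t ht
    rw [interior_Ioo] at ht
    obtain ⟨ht0, htπ⟩ := ht
    have hd : deriv (fun t => Real.sin t / t) t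
        = (Real.cos t * t - Real.sin t * 1) / t ^ 2 := by
      rw [deriv_fun_div (Real.differentiable_sin.differentiableAt)
        differentiableAt_fun_id (ne_of_gt ht0)]
      simp [Real.deriv_sin]
    rw [hd]
    apply div_neg_of_neg_of_pos _ (by positivity)
    rcases lt_or_ge t (π/2) with h | h
    · have htan := Real.lt_tan ht0 h
      rw [Real.tan_eq_sin_div_cos] at htan
      have hcos : 0 < Real.cos t := Real.cos_pos_of_mem_Ioo ⟨by linarith, h⟩
      rw [lt_div_iff₀ hcos] at htan
      nlinarith
    · have hcos : Real.cos t ≤ 0 :=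
        Real.cos_nonpos_of_pi_div_two_le_of_le h (by linarith [Real.pi_pos])
      have hsin : 0 < Real.sin t := Real.sin_pos_of_pos_of_lt_pi ht0 htπ
      nlinarith

lemma den_scale_eq (β u : ℝ) :
    Real.cos (2 * (u * β)) - Real.cos (2 * β)
      = 2 * (Real.sin (β * (1+u)) * Real.sin (β * (1-u))) := by
  rw [den_eq β (u * β), show β + u * β = β * (1+u) by ring,
    show β - u * β = β * (1-u) by ring]

lemma h_lt {β γ u : ℝ} (hβ0 : 0 < β) (hβγ : β < γ) (hγ : γ < π/2)
    (hu0 : 0 < u) (hu1 : u < 1) :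
    β * f β (u * β) < γ * f γ (u * γ) := by
  have hπ := Real.pi_pos
  have hγ0 : 0 < γ := hβ0.trans hβγ
  set a1 := β * (1+u); set a2 := γ * (1+u); set b1 := β * (1-u); set b2 := γ * (1-u)
  have ha1 : 0 < a1 := by positivity
  have hb1 : 0 < b1 := by have : 0 < 1 - u := by linarith
                          positivity
  have ha2π : a2 < π := by
    show γ * (1+u) < π
    nlinarith [mul_lt_mul_of_pos_left (show (1:ℝ)+u < 2 by linarith) hγ0]
  have hb2π : b2 < π := by
    show γ * (1-u) < π
    nlinarith [mul_lt_mul_of_pos_left (show (1:ℝ)-u < 2 by linarith) hγ0]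
  have ha12 : a1 < a2 := by have : 0 < 1 + u := by linarith
                            exact mul_lt_mul_of_pos_right hβγ this
  have hb12 : b1 < b2 := by have : 0 < 1 - u := by linarith
                            exact mul_lt_mul_of_pos_right hβγ this
  have ha2 : 0 < a2 := ha1.trans ha12
  have hb2 : 0 < b2 := hb1.trans hb12
  have ha1π : a1 < π := ha12.trans ha2π
  have hb1π : b1 < π := hb12.trans hb2π
  have sA : Real.sin a2 / a2 < Real.sin a1 / a1 :=
    sinc_anti ⟨ha1, ha1π⟩ ⟨ha2, ha2π⟩ ha12
  have sB : Real.sin b2 / b2 < Real.sin b1 / b1 :=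
    sinc_anti ⟨hb1, hb1π⟩ ⟨hb2, hb2π⟩ hb12
  have pA2 : 0 < Real.sin a2 / a2 :=
    div_pos (Real.sin_pos_of_pos_of_lt_pi ha2 ha2π) ha2
  have pB2 : 0 < Real.sin b2 / b2 :=
    div_pos (Real.sin_pos_of_pos_of_lt_pi hb2 hb2π) hb2
  set Dβ := 2 * (Real.sin a1 * Real.sin b1) with hDβ
  set Dγ := 2 * (Real.sin a2 * Real.sin b2) with hDγ
  have hDβ0 : 0 < Dβ := by
    have := Real.sin_pos_of_pos_of_lt_pi ha1 ha1π
    have := Real.sin_pos_of_pos_of_lt_pi hb1 hb1π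
    positivity
  have hDγ0 : 0 < Dγ := by
    have := Real.sin_pos_of_pos_of_lt_pi ha2 ha2π
    have := Real.sin_pos_of_pos_of_lt_pi hb2 hb2π
    positivity
  have idβ : Dβ / β^2 = 2 * ((1+u)*(1-u)) * ((Real.sin a1 / a1) * (Real.sin b1 / b1)) := by
    rw [hDβ]; unfold a1 b1
    have h1 : (1:ℝ) + u ≠ 0 := by linarith
    have h2 : (1:ℝ) - u ≠ 0 := by linarith
    field_simp
  have idγ : Dγ / γ^2 = 2 * ((1+u)*(1-u)) * ((Real.sin a2 / a2) * (Real.sin b2 / b2)) := by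
    rw [hDγ]; unfold a2 b2
    have h1 : (1:ℝ) + u ≠ 0 := by linarith
    have h2 : (1:ℝ) - u ≠ 0 := by linarith
    field_simp
  have key : Dγ / γ^2 < Dβ / β^2 := by
    rw [idβ, idγ]
    have hc0 : (0:ℝ) < 2 * ((1+u)*(1-u)) := by nlinarith
    exact mul_lt_mul_of_pos_left (mul_lt_mul'' sA sB pA2.le pB2.le) hc0
  have key2 : β^2 / Dβ < γ^2 / Dγ := by
    rw [div_lt_div_iff₀ hDβ0 hDγ0]
    rw [div_lt_div_iff₀ (by positivity : (0:ℝ) < γ^2) (by positivity : (0:ℝ) < β^2)] at key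
    nlinarith
  have eβ : β * f β (u * β) = Real.sqrt (β^2 / Dβ) := by
    unfold f
    rw [den_scale_eq, ← hDβ, Real.sqrt_div (sq_nonneg β), Real.sqrt_sq hβ0.le]
    field_simp
  have eγ : γ * f γ (u * γ) = Real.sqrt (γ^2 / Dγ) := by
    unfold f
    rw [den_scale_eq, ← hDγ, Real.sqrt_div (sq_nonneg γ), Real.sqrt_sq hγ0.le]
    field_simp
  rw [eβ, eγ]
  exact Real.sqrt_lt_sqrt (by positivity) key2

lemma T_mono {β γ : ℝ} (hβ0 : 0 < β) (hβγ : β < γ) (hγ : γ < π/2) :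
    timeMapT β < timeMapT γ := by
  have hγ0 : 0 < γ := hβ0.trans hβγ
  have hβπ : β < π/2 := hβγ.trans hγ
  have hFβ := Fscaled_integrable hβ0 hβπ
  have hFγ := Fscaled_integrable hγ0 hγ
  rw [T_scale hβ0, T_scale hγ0]
  have hsub := intervalIntegral.integral_sub hFγ hFβ
  have hpos : 0 < ∫ u in (0:ℝ)..(1:ℝ), (γ * f γ (u * γ) - β * f β (u * β)) := by
    apply intervalIntegral_pos_of_pos_on (hFγ.sub hFβ) _ one_pos
    intro u hu
    exact sub_pos.2 (h_lt hβ0 hβγ hγ hu.1 hu.2)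
  rw [hsub] at hpos
  linarith

lemma f_int_sub {α c d : ℝ} (hα0 : 0 < α) (hαπ : α < π/2) (hc : 0 ≤ c)
    (hcd : c ≤ d) (hd : d ≤ α) : IntervalIntegrable (f α) volume c d :=
  (integrable_f hα0 hαπ).mono_set (by
    rw [Set.uIcc_of_le hcd, Set.uIcc_of_le hα0.le]
    exact Set.Icc_subset_Icc hc hd)

lemma f_le_f {x β α : ℝ} (hx : 0 ≤ x) (hxβ : x < β) (hβα : β ≤ α)
    (hαπ : α ≤ π/2) : f α x ≤ f β x := by
  have hπ := Real.pi_pos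
  have hdβ : 0 < Real.cos (2*x) - Real.cos (2*β) := den_pos hx hxβ (by linarith)
  have hcos : Real.cos (2*α) ≤ Real.cos (2*β) :=
    Real.strictAntiOn_cos.antitoneOn ⟨by linarith, by linarith⟩
      ⟨by linarith, by linarith⟩ (by linarith)
  exact one_div_le_one_div_of_le (Real.sqrt_pos.2 hdβ)
    (Real.sqrt_le_sqrt (by linarith))

/-- Deficit bound : `T₁(φ₁,φ₀) - T₁(α,φ₀) ≤ T(φ₁) - T₁(α,φ₁)`. -/
lemma deficit {φ₀ φ₁ α : ℝ} (h₀ : 0 < φ₀) (h₀₁ : φ₀ < φ₁) (hφα : φ₁ < α)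
    (hαπ : α < π/2) :
    (∫ x in (0:ℝ)..φ₀, f φ₁ x) - (∫ x in (0:ℝ)..φ₀, f α x)
      ≤ (∫ x in (0:ℝ)..φ₁, f φ₁ x) - (∫ x in (0:ℝ)..φ₁, f α x) := by
  have h0φ₁ : 0 < φ₁ := h₀.trans h₀₁
  have hφ₁π : φ₁ < π/2 := hφα.trans hαπ
  have hα0 : 0 < α := h0φ₁.trans hφα
  have i1 : IntervalIntegrable (f φ₁) volume 0 φ₁ := integrable_f h0φ₁ hφ₁π
  have i2 : IntervalIntegrable (f α) volume 0 φ₁ :=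
    f_int_sub hα0 hαπ le_rfl h0φ₁.le hφα.le
  have i3 : IntervalIntegrable (f φ₁) volume 0 φ₀ :=
    i1.mono_set (by
      rw [Set.uIcc_of_le h₀.le, Set.uIcc_of_le h0φ₁.le]
      exact Set.Icc_subset_Icc le_rfl h₀₁.le)
  have i4 : IntervalIntegrable (f α) volume 0 φ₀ :=
    f_int_sub hα0 hαπ le_rfl h₀.le (by linarith)
  rw [← intervalIntegral.integral_sub i3 i4, ← intervalIntegral.integral_sub i1 i2]
  apply intervalIntegral.integral_mono_interval le_rfl h₀.le h₀₁.le _ (i1.sub i2)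
  refine MeasureTheory.ae_restrict_of_ae_eq_of_ae_restrict MeasureTheory.Ioo_ae_eq_Ioc ?_
  rw [MeasureTheory.ae_restrict_iff' measurableSet_Ioo]
  filter_upwards with x hx
  exact sub_nonneg.2 (f_le_f hx.1.le hx.2 hφα.le hαπ.le)

/-- Tail estimate: `∫_{φ₁}^α f_α ≤ C √(α - φ₁)`. -/
lemma tail_bound {φ₁ ψ α : ℝ} (h0 : 0 < φ₁) (hφα : φ₁ < α) (hαψ : α ≤ ψ)
    (hψ : ψ < π/2) :
    ∫ x in φ₁..α, f α x
      ≤ (1 / Real.sqrt (4/π * min (Real.sin (2*φ₁)) (Real.sin (2*ψ))))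
          * (2 * Real.sqrt (α - φ₁)) := by
  have hπ := Real.pi_pos
  set m := min (Real.sin (2*φ₁)) (Real.sin (2*ψ)) with hm
  have hm0 : 0 < m := lt_min
    (Real.sin_pos_of_pos_of_lt_pi (by linarith) (by linarith))
    (Real.sin_pos_of_pos_of_lt_pi (by linarith) (by linarith))
  set c := 4/π * m with hc
  have hc0 : 0 < c := by positivity
  have hα0 : 0 < α := h0.trans hφα
  have hαπ : α < π/2 := lt_of_le_of_lt hαψ hψ
  have step1 : ∫ x in φ₁..α, f α x
      ≤ ∫ x in φ₁..α, (1 / Real.sqrt c) * ((α - x) ^ (-(1:ℝ)/2)) := by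
    apply intervalIntegral.integral_mono_on hφα.le
      (f_int_sub hα0 hαπ h0.le hφα.le le_rfl) (bound_integrable c φ₁ α)
    intro x hx
    apply f_le hc0 _ hx.2
    apply den_lb hm0.le _ (by linarith [hx.2]) (by linarith [hx.1])
    exact sin_min (by linarith) (by linarith [hx.1]) (by linarith [hx.2]) (by linarith)
  have step2 : ∫ x in φ₁..α, (1 / Real.sqrt c) * ((α - x) ^ (-(1:ℝ)/2))
      = (1 / Real.sqrt c) * (2 * Real.sqrt (α - φ₁)) := by
    rw [intervalIntegral.integral_const_mul]
    congr 1
    have h := intervalIntegral.integral_comp_sub_left (a := φ₁) (b := α)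
      (fun y => y ^ (-(1:ℝ)/2)) α
    rw [h, sub_self]
    rw [integral_rpow (Or.inl (by norm_num))]
    rw [Real.zero_rpow (by norm_num)]
    rw [show (-(1:ℝ)/2 + 1) = 1/2 by norm_num, ← Real.sqrt_eq_rpow]
    ring
  calc ∫ x in φ₁..α, f α x ≤ _ := step1
    _ = _ := step2

lemma ae_ne_one : ∀ᵐ u : ℝ, u ≠ (1:ℝ) := by
  rw [MeasureTheory.ae_iff]
  have : {u : ℝ | ¬ u ≠ 1} = {(1:ℝ)} := by ext u; simp
  rw [this]
  exact Real.volume_singleton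

lemma tendstoT1 {φ φ₁ : ℝ} (h0 : 0 < φ) (hφ : φ < φ₁) (h1 : φ₁ < π/2) :
    Tendsto (fun α => ∫ x in (0:ℝ)..φ, f α x) (nhdsWithin φ₁ (Set.Ioi φ₁))
      (nhds (∫ x in (0:ℝ)..φ, f φ₁ x)) := by
  have hπ := Real.pi_pos
  have hden0 : 0 < Real.cos (2*φ) - Real.cos (2*φ₁) := den_pos h0.le hφ h1.le
  apply intervalIntegral.tendsto_integral_filter_of_dominated_convergence
    (fun _ => 1 / Real.sqrt (Real.cos (2*φ) - Real.cos (2*φ₁)))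
  · exact Eventually.of_forall fun α => (f_meas α).aestronglyMeasurable
  · filter_upwards [Ioo_mem_nhdsGT_of_mem (Set.mem_Ico.2 ⟨le_refl φ₁, h1⟩)] with α hα
    apply Eventually.of_forall
    intro x hx
    rw [Set.uIoc_of_le h0.le] at hx
    rw [Real.norm_eq_abs, abs_of_nonneg (f_nonneg α x)]
    have hx1 := hx.1
    have hx2 := hx.2
    have hα1 := hα.1
    have hα2 := hα.2
    have hcx : Real.cos (2*φ) ≤ Real.cos (2*x) :=
      Real.strictAntiOn_cos.antitoneOn ⟨by linarith, by linarith⟩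
        ⟨by linarith, by linarith⟩ (by linarith)
    have hcα : Real.cos (2*α) ≤ Real.cos (2*φ₁) :=
      Real.strictAntiOn_cos.antitoneOn ⟨by linarith, by linarith⟩
        ⟨by linarith, by linarith⟩ (by linarith)
    exact one_div_le_one_div_of_le (Real.sqrt_pos.2 hden0)
      (Real.sqrt_le_sqrt (by linarith))
  · exact intervalIntegrable_const
  · apply Eventually.of_forall
    intro x hx
    rw [Set.uIoc_of_le h0.le] at hx
    have hdx : 0 < Real.cos (2*x) - Real.cos (2*φ₁) :=
      den_pos (by linarith [hx.1]) (by linarith [hx.2]) h1.le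
    have hcont : ContinuousAt (fun α => f α x) φ₁ := by
      apply ContinuousAt.div continuousAt_const
      · exact (Real.continuous_sqrt.continuousAt).comp (by fun_prop)
      · exact ne_of_gt (Real.sqrt_pos.2 hdx)
    exact hcont.tendsto.mono_left nhdsWithin_le_nhds

lemma tendstoT {φ₁ : ℝ} (h0 : 0 < φ₁) (h1 : φ₁ < π/2) :
    Tendsto timeMapT (nhdsWithin φ₁ (Set.Ioi φ₁)) (nhds (timeMapT φ₁)) := by
  have hπ := Real.pi_pos
  set ψ := (φ₁ + π/2)/2 with hψ
  have hφψ : φ₁ < ψ := by rw [hψ]; linarith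
  have hψπ : ψ < π/2 := by rw [hψ]; linarith
  have hψ0 : 0 < ψ := h0.trans hφψ
  have hDCT : Tendsto (fun α => ∫ u in (0:ℝ)..(1:ℝ), α * f α (u * α))
      (nhdsWithin φ₁ (Set.Ioi φ₁)) (nhds (∫ u in (0:ℝ)..(1:ℝ), φ₁ * f φ₁ (u * φ₁))) := by
    apply intervalIntegral.tendsto_integral_filter_of_dominated_convergence
      (fun u => ψ * f ψ (u * ψ))
    · apply Eventually.of_forall
      intro α
      exact (((f_meas α).comp (measurable_id.mul_const α)).const_mul α).aestronglyMeasurable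
    · filter_upwards [Ioo_mem_nhdsGT_of_mem (Set.mem_Ico.2 ⟨le_refl φ₁, hφψ⟩)] with α hα
      filter_upwards [ae_ne_one] with u hu1 hu
      rw [Set.uIoc_of_le zero_le_one] at hu
      have hu1' : u < 1 := lt_of_le_of_ne hu.2 hu1
      rw [Real.norm_eq_abs, abs_of_nonneg
        (mul_nonneg (le_of_lt (h0.trans hα.1)) (f_nonneg α (u*α)))]
      exact (h_lt (h0.trans hα.1) hα.2 hψπ hu.1 hu1').le
    · exact Fscaled_integrable hψ0 hψπ
    · filter_upwards [ae_ne_one] with u hu1 hu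
      rw [Set.uIoc_of_le zero_le_one] at hu
      have hu1' : u < 1 := lt_of_le_of_ne hu.2 hu1
      have hdx : 0 < Real.cos (2*(u*φ₁)) - Real.cos (2*φ₁) :=
        den_pos (mul_nonneg hu.1.le h0.le) (by nlinarith [hu.1, hu1', h0]) h1.le
      have hcont : ContinuousAt (fun α => α * f α (u * α)) φ₁ := by
        apply ContinuousAt.mul continuousAt_id
        apply ContinuousAt.div continuousAt_const
        · exact (Real.continuous_sqrt.continuousAt).comp (by fun_prop)
        · exact ne_of_gt (Real.sqrt_pos.2 hdx)
      exact hcont.tendsto.mono_left nhdsWithin_le_nhds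
  rw [← T_scale h0] at hDCT
  apply Tendsto.congr' _ hDCT
  filter_upwards [self_mem_nhdsWithin] with α hα
  exact (T_scale (h0.trans hα)).symm

lemma tendsto_tail {φ₁ : ℝ} (h0 : 0 < φ₁) (h1 : φ₁ < π/2) :
    Tendsto (fun α => ∫ x in φ₁..α, f α x) (nhdsWithin φ₁ (Set.Ioi φ₁)) (nhds 0) := by
  have hπ := Real.pi_pos
  set ψ := (φ₁ + π/2)/2 with hψ
  have hφψ : φ₁ < ψ := by rw [hψ]; linarith
  have hψπ : ψ < π/2 := by rw [hψ]; linarith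
  set c := 4/π * min (Real.sin (2*φ₁)) (Real.sin (2*ψ)) with hc
  have hupper : Tendsto (fun α => (1 / Real.sqrt c) * (2 * Real.sqrt (α - φ₁)))
      (nhdsWithin φ₁ (Set.Ioi φ₁)) (nhds 0) := by
    have hcont : ContinuousAt (fun α => (1 / Real.sqrt c) * (2 * Real.sqrt (α - φ₁))) φ₁ := by
      apply continuousAt_const.mul
      apply continuousAt_const.mul
      exact (Real.continuous_sqrt.continuousAt).comp (continuousAt_id.sub continuousAt_const)
    have := hcont.tendsto.mono_left (nhdsWithin_le_nhds (s := Set.Ioi φ₁))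
    simpa using this
  apply tendsto_of_tendsto_of_tendsto_of_le_of_le' tendsto_const_nhds hupper
  · filter_upwards [self_mem_nhdsWithin] with α hα
    exact intervalIntegral.integral_nonneg (le_of_lt hα) (fun x _ => f_nonneg α x)
  · filter_upwards [Ioo_mem_nhdsGT_of_mem (Set.mem_Ico.2 ⟨le_refl φ₁, hφψ⟩)] with α hα
    exact tail_bound h0 hα.1 (le_of_lt hα.2) hψπ

end TimeAux

/-- For `0 < φ₀ < φ₁ < π/2`, the map
`T_{C_r}(α) = 2T(α) + T₁(α, φ₀) − T₁(α, φ₁)` tends to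
`T_* = T(φ₁) + T₁(φ₁, φ₀)` as `α → φ₁⁺`, and `T_{C_r}(α) > T_*`
for every `α ∈ (φ₁, π/2)`. -/
theorem timeMapTCr_supercritical (φ₀ φ₁ : ℝ) (h₀ : 0 < φ₀) (h₀₁ : φ₀ < φ₁)
    (h₁ : φ₁ < π / 2) :
    Tendsto (fun α => 2 * timeMapT α + timeMapT1 α φ₀ - timeMapT1 α φ₁)
      (nhdsWithin φ₁ (Set.Ioi φ₁)) (nhds (timeMapT φ₁ + timeMapT1 φ₁ φ₀)) ∧
    ∀ α ∈ Set.Ioo φ₁ (π / 2),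
      2 * timeMapT α + timeMapT1 α φ₀ - timeMapT1 α φ₁ >
        timeMapT φ₁ + timeMapT1 φ₁ φ₀ := by
  have h0φ₁ : 0 < φ₁ := h₀.trans h₀₁
  constructor
  · -- the limit statement
    have hT := TimeAux.tendstoT h0φ₁ h₁
    have hT1 := TimeAux.tendstoT1 h₀ h₀₁ h₁
    have htail := TimeAux.tendsto_tail h0φ₁ h₁
    have e0 : (∫ x in (0:ℝ)..φ₀, TimeAux.f φ₁ x) = timeMapT1 φ₁ φ₀ := rfl
    have key : Tendsto (fun α => timeMapT α + (∫ x in (0:ℝ)..φ₀, TimeAux.f α x)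
        + (∫ x in φ₁..α, TimeAux.f α x)) (nhdsWithin φ₁ (Set.Ioi φ₁))
        (nhds (timeMapT φ₁ + timeMapT1 φ₁ φ₀)) := by
      have h' := (hT.add hT1).add htail
      rw [add_zero, e0] at h'
      exact h'
    apply Tendsto.congr' _ key
    filter_upwards [Ioo_mem_nhdsGT_of_mem (Set.mem_Ico.2 ⟨le_refl φ₁, h₁⟩)] with α hα
    have hα0 : 0 < α := h0φ₁.trans hα.1
    have hsplit : (∫ x in (0:ℝ)..φ₁, TimeAux.f α x) + (∫ x in φ₁..α, TimeAux.f α x)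
        = ∫ x in (0:ℝ)..α, TimeAux.f α x :=
      intervalIntegral.integral_add_adjacent_intervals
        (TimeAux.f_int_sub hα0 hα.2 le_rfl h0φ₁.le hα.1.le)
        (TimeAux.f_int_sub hα0 hα.2 h0φ₁.le hα.1.le le_rfl)
    have e1 : timeMapT1 α φ₀ = ∫ x in (0:ℝ)..φ₀, TimeAux.f α x := rfl
    have e2 : timeMapT1 α φ₁ = ∫ x in (0:ℝ)..φ₁, TimeAux.f α x := rfl
    have e3 : timeMapT α = ∫ x in (0:ℝ)..α, TimeAux.f α x := rfl
    rw [e1, e2, e3]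
    linarith [hsplit]
  · -- the strict inequality
    intro α hα
    have hd := TimeAux.deficit h₀ h₀₁ hα.1 hα.2
    have hm := TimeAux.T_mono h0φ₁ hα.1 hα.2
    have e1 : timeMapT1 α φ₀ = ∫ x in (0:ℝ)..φ₀, TimeAux.f α x := rfl
    have e2 : timeMapT1 α φ₁ = ∫ x in (0:ℝ)..φ₁, TimeAux.f α x := rfl
    have e3 : timeMapT1 φ₁ φ₀ = ∫ x in (0:ℝ)..φ₀, TimeAux.f φ₁ x := rfl
    have e4 : timeMapT φ₁ = ∫ x in (0:ℝ)..φ₁, TimeAux.f φ₁ x := rfl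
    have e5 : timeMapT α = ∫ x in (0:ℝ)..α, TimeAux.f α x := rfl
    rw [gt_iff_lt]
    linarith [hd, hm, e1, e2, e3, e4]
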